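/- (Corollary 1(a)) Suppose q is even (q(−x) = q(x) a.e.). Let λ₀ ∈ ℂ satisfy F(λ₀) = 2, F'(λ₀) = 0, F''(λ₀) ≠ 0, and assume φ(1,·) and θ'(1,·) are not identically zero and have at most a simple zero at λ₀ (these hypotheses hold for every sufficiently large double eigenvalue of L₀). Then φ(1,λ₀) = 0 and θ'(1,λ₀) = 0, hence θ(1,λ₀) = φ'(1,λ₀) = 1 and every solution of −y'' + qy = λ₀y on [0,1] satisfies the periodic boundary conditions y(1) = y(0), y'(1) = y'(0). In particular, the eigenvalue λ₀ of L₀ has geometric multiplicity 2 and L₀ has no associated function corresponding to λ₀. The analogous statement holds for L_π (F(λ₀) = −2, antiperiodic boundary conditions). -/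

import Mathlib

open MeasureTheory Set
open scoped Real Classical

noncomputable section


lemma tri {x : ℝ} (h0 : (0:ℝ) ≤ x) (f g : ℝ → ℂ)
    (hf : IntegrableOn f (Ioc 0 x) volume) (hg : IntegrableOn g (Ioc 0 x) volume)
    (W : Set (ℝ × ℝ)) (hW : MeasurableSet W)
    (hsec : ∀ s ∈ Ioc (0:ℝ) x,
      (Set.preimage (fun t => (s, t)) W ∩ Ioc 0 x : Set ℝ) =ᵐ[volume] Ioc 0 s) :
    ∫ p in W, f p.1 * g p.2 ∂((volume.restrict (Ioc 0 x)).prod (volume.restrict (Ioc 0 x)))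
      = ∫ s in (0:ℝ)..x, f s * ∫ t in (0:ℝ)..s, g t := by
  rw [← integral_indicator hW,
    integral_prod _ ((hf.mul_prod hg).indicator hW),
    intervalIntegral.integral_of_le h0]
  apply setIntegral_congr_fun measurableSet_Ioc
  intro s hs
  have hmeas : MeasurableSet (Set.preimage (fun t => (s, t)) W) :=
    hW.preimage (measurable_const.prodMk measurable_id)
  have h1 : (fun t => W.indicator (fun p : ℝ × ℝ => f p.1 * g p.2) (s, t))
      = fun t => (Set.preimage (fun t => (s, t)) W).indicator (fun t => f s * g t) t := by
    funext t; simp [Set.indicator, Set.mem_preimage]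
  dsimp only
  rw [h1, integral_indicator hmeas, Measure.restrict_restrict hmeas,
    setIntegral_congr_set (hsec s hs), intervalIntegral.integral_of_le hs.1.le,
    integral_const_mul]

lemma primitive_prod {f g : ℝ → ℂ} {x : ℝ} (h0 : (0:ℝ) ≤ x) (hx1 : x ≤ 1)
    (hf : IntervalIntegrable f volume 0 1) (hg : IntervalIntegrable g volume 0 1) :
    (∫ s in (0:ℝ)..x, f s) * (∫ s in (0:ℝ)..x, g s)
      = (∫ s in (0:ℝ)..x, f s * ∫ t in (0:ℝ)..s, g t)
        + ∫ s in (0:ℝ)..x, g s * ∫ t in (0:ℝ)..s, f t := by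
  have hsub : Set.uIcc (0:ℝ) x ⊆ Set.uIcc (0:ℝ) 1 := by
    rw [uIcc_of_le h0, uIcc_of_le (by norm_num : (0:ℝ) ≤ 1)]
    exact Icc_subset_Icc le_rfl hx1
  have hfx : IntegrableOn f (Ioc 0 x) volume :=
    (intervalIntegrable_iff_integrableOn_Ioc_of_le h0).mp (hf.mono_set hsub)
  have hgx : IntegrableOn g (Ioc 0 x) volume :=
    (intervalIntegrable_iff_integrableOn_Ioc_of_le h0).mp (hg.mono_set hsub)
  set μ := volume.restrict (Ioc (0:ℝ) x) with hμ
  have hint : Integrable (fun p : ℝ × ℝ => f p.1 * g p.2) (μ.prod μ) := hfx.mul_prod hgx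
  have hS : MeasurableSet {p : ℝ × ℝ | p.2 ≤ p.1} :=
    measurableSet_le measurable_snd measurable_fst
  have hlhs : (∫ s in (0:ℝ)..x, f s) * (∫ s in (0:ℝ)..x, g s)
      = ∫ p, f p.1 * g p.2 ∂(μ.prod μ) := by
    rw [integral_prod_mul, intervalIntegral.integral_of_le h0,
      intervalIntegral.integral_of_le h0]
  have hsplit : ∫ p, f p.1 * g p.2 ∂(μ.prod μ)
      = (∫ p in {p : ℝ × ℝ | p.2 ≤ p.1}, f p.1 * g p.2 ∂(μ.prod μ))
        + ∫ p in {p : ℝ × ℝ | p.2 ≤ p.1}ᶜ, f p.1 * g p.2 ∂(μ.prod μ) :=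
    (integral_add_compl hS hint).symm
  have t1 : (∫ p in {p : ℝ × ℝ | p.2 ≤ p.1}, f p.1 * g p.2 ∂(μ.prod μ))
      = ∫ s in (0:ℝ)..x, f s * ∫ t in (0:ℝ)..s, g t := by
    apply tri h0 f g hfx hgx _ hS
    intro s hs
    have : (Set.preimage (fun t => (s, t)) {p : ℝ × ℝ | p.2 ≤ p.1} ∩ Ioc 0 x : Set ℝ)
        = Ioc 0 s := by
      ext t
      simp only [Set.mem_inter_iff, Set.mem_preimage, Set.mem_setOf_eq, Set.mem_Ioc]
      constructor
      · rintro ⟨h1, h2, h3⟩; exact ⟨h2, h1⟩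
      · rintro ⟨h1, h2⟩; exact ⟨h2, h1, h2.trans hs.2⟩
    rw [this]
    exact Filter.EventuallyEq.rfl
  have hswap : (∫ p in {p : ℝ × ℝ | p.2 ≤ p.1}ᶜ, f p.1 * g p.2 ∂(μ.prod μ))
      = ∫ p in {p : ℝ × ℝ | p.2 < p.1}, g p.1 * f p.2 ∂(μ.prod μ) := by
    rw [← integral_indicator hS.compl,
      ← integral_indicator ((measurableSet_lt measurable_snd measurable_fst)),
      ← MeasureTheory.integral_prod_swap]
    congr 1
    funext p
    simp only [Set.indicator_apply, Set.mem_compl_iff, Set.mem_setOf_eq,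
      Prod.fst_swap, Prod.snd_swap, not_le]
    by_cases h : p.2 < p.1
    · simp [h, mul_comm]
    · simp [h]
  have t2 : (∫ p in {p : ℝ × ℝ | p.2 < p.1}, g p.1 * f p.2 ∂(μ.prod μ))
      = ∫ s in (0:ℝ)..x, g s * ∫ t in (0:ℝ)..s, f t := by
    apply tri h0 g f hgx hfx _ (measurableSet_lt measurable_snd measurable_fst)
    intro s hs
    have : (Set.preimage (fun t => (s, t)) {p : ℝ × ℝ | p.2 < p.1} ∩ Ioc 0 x : Set ℝ)
        = Ioo 0 s := by
      ext t
      simp only [Set.mem_inter_iff, Set.mem_preimage, Set.mem_setOf_eq, Set.mem_Ioc,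
        Set.mem_Ioo]
      constructor
      · rintro ⟨h1, h2, h3⟩; exact ⟨h2, h1⟩
      · rintro ⟨h1, h2⟩; exact ⟨h2, h1, h2.le.trans hs.2⟩
    rw [this]
    exact Ioo_ae_eq_Ioc
  rw [hlhs, hsplit, t1, hswap, t2]

lemma wron {u ud fu v vd fv : ℝ → ℂ} {x : ℝ} (h0 : (0:ℝ) ≤ x) (hx1 : x ≤ 1)
    (hiud : IntervalIntegrable ud volume 0 1) (hifu : IntervalIntegrable fu volume 0 1)
    (hivd : IntervalIntegrable vd volume 0 1) (hifv : IntervalIntegrable fv volume 0 1)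
    (hu : ∀ y ∈ Icc (0:ℝ) 1, u y = u 0 + ∫ s in (0:ℝ)..y, ud s)
    (hud : ∀ y ∈ Icc (0:ℝ) 1, ud y = ud 0 + ∫ s in (0:ℝ)..y, fu s)
    (hv : ∀ y ∈ Icc (0:ℝ) 1, v y = v 0 + ∫ s in (0:ℝ)..y, vd s)
    (hvd : ∀ y ∈ Icc (0:ℝ) 1, vd y = vd 0 + ∫ s in (0:ℝ)..y, fv s) :
    u x * vd x - ud x * v x
      = u 0 * vd 0 - ud 0 * v 0 + ∫ s in (0:ℝ)..x, (u s * fv s - fu s * v s) := by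
  have hxI : x ∈ Icc (0:ℝ) 1 := ⟨h0, hx1⟩
  have hsub : Set.uIcc (0:ℝ) x ⊆ Set.uIcc (0:ℝ) 1 := by
    rw [uIcc_of_le h0, uIcc_of_le (by norm_num : (0:ℝ) ≤ 1)]
    exact Icc_subset_Icc le_rfl hx1
  have hIccsub : Set.uIcc (0:ℝ) x ⊆ Icc (0:ℝ) 1 := by
    rw [uIcc_of_le h0]; exact Icc_subset_Icc le_rfl hx1
  have hiud' := hiud.mono_set hsub
  have hifu' := hifu.mono_set hsub
  have hivd' := hivd.mono_set hsub
  have hifv' := hifv.mono_set hsub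
  have hUcont : ContinuousOn (fun s => ∫ t in (0:ℝ)..s, ud t) (Set.uIcc 0 x) :=
    intervalIntegral.continuousOn_primitive_interval' hiud' left_mem_uIcc
  have hFucont : ContinuousOn (fun s => ∫ t in (0:ℝ)..s, fu t) (Set.uIcc 0 x) :=
    intervalIntegral.continuousOn_primitive_interval' hifu' left_mem_uIcc
  have hVcont : ContinuousOn (fun s => ∫ t in (0:ℝ)..s, vd t) (Set.uIcc 0 x) :=
    intervalIntegral.continuousOn_primitive_interval' hivd' left_mem_uIcc
  have hFvcont : ContinuousOn (fun s => ∫ t in (0:ℝ)..s, fv t) (Set.uIcc 0 x) :=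
    intervalIntegral.continuousOn_primitive_interval' hifv' left_mem_uIcc
  have hucont : ContinuousOn u (Set.uIcc 0 x) := by
    apply ContinuousOn.congr (continuousOn_const.add hUcont)
    intro s hs; exact hu s (hIccsub hs)
  have hvcont : ContinuousOn v (Set.uIcc 0 x) := by
    apply ContinuousOn.congr (continuousOn_const.add hVcont)
    intro s hs; exact hv s (hIccsub hs)
  -- integrabilities of products
  have hiUfv : IntervalIntegrable (fun s => (∫ t in (0:ℝ)..s, ud t) * fv s) volume 0 x :=
    hifv'.continuousOn_mul hUcont
  have hifvU : IntervalIntegrable (fun s => fv s * ∫ t in (0:ℝ)..s, ud t) volume 0 x := by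
    apply hiUfv.congr
    intro s _; exact mul_comm _ _
  have hifuV : IntervalIntegrable (fun s => fu s * ∫ t in (0:ℝ)..s, vd t) volume 0 x :=
    hifu'.mul_continuousOn hVcont
  have hiudFv : IntervalIntegrable (fun s => ud s * ∫ t in (0:ℝ)..s, fv t) volume 0 x :=
    hiud'.mul_continuousOn hFvcont
  have hivdFu : IntervalIntegrable (fun s => vd s * ∫ t in (0:ℝ)..s, fu t) volume 0 x :=
    hivd'.mul_continuousOn hFucont
  have hiFuFv : IntervalIntegrable
      (fun s => (∫ t in (0:ℝ)..s, fu t) * ∫ t in (0:ℝ)..s, fv t) volume 0 x :=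
    (hFucont.mul hFvcont).intervalIntegrable
  have hiFvFu : IntervalIntegrable
      (fun s => (∫ t in (0:ℝ)..s, fv t) * ∫ t in (0:ℝ)..s, fu t) volume 0 x :=
    (hFvcont.mul hFucont).intervalIntegrable
  have hiFu : IntervalIntegrable (fun s => ∫ t in (0:ℝ)..s, fu t) volume 0 x :=
    hFucont.intervalIntegrable
  have hiFv : IntervalIntegrable (fun s => ∫ t in (0:ℝ)..s, fv t) volume 0 x :=
    hFvcont.intervalIntegrable
  have hiufv : IntervalIntegrable (fun s => u s * fv s) volume 0 x :=
    hifv'.continuousOn_mul hucont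
  have hifuv : IntervalIntegrable (fun s => fu s * v s) volume 0 x :=
    hifu'.mul_continuousOn hvcont
  -- product identities
  have P1 := primitive_prod h0 hx1 hiud hifv
  have P2 := primitive_prod h0 hx1 hifu hivd
  -- decompositions
  have E1a : (∫ s in (0:ℝ)..x, u s * fv s)
      = u 0 * (∫ s in (0:ℝ)..x, fv s)
        + ∫ s in (0:ℝ)..x, fv s * ∫ t in (0:ℝ)..s, ud t := by
    have h : EqOn (fun s => u s * fv s)
        (fun s => u 0 * fv s + fv s * ∫ t in (0:ℝ)..s, ud t) (Set.uIcc 0 x) := by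
      intro s hs; simp only; rw [hu s (hIccsub hs)]; ring
    rw [intervalIntegral.integral_congr h,
      intervalIntegral.integral_add (hifv'.const_mul _) hifvU,
      intervalIntegral.integral_const_mul]
  have E1b : (∫ s in (0:ℝ)..x, fu s * v s)
      = v 0 * (∫ s in (0:ℝ)..x, fu s)
        + ∫ s in (0:ℝ)..x, fu s * ∫ t in (0:ℝ)..s, vd t := by
    have h : EqOn (fun s => fu s * v s)
        (fun s => v 0 * fu s + fu s * ∫ t in (0:ℝ)..s, vd t) (Set.uIcc 0 x) := by
      intro s hs; simp only; rw [hv s (hIccsub hs)]; ring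
    rw [intervalIntegral.integral_congr h,
      intervalIntegral.integral_add (hifu'.const_mul _) hifuV,
      intervalIntegral.integral_const_mul]
  have E1 : (∫ s in (0:ℝ)..x, (u s * fv s - fu s * v s))
      = (∫ s in (0:ℝ)..x, u s * fv s) - ∫ s in (0:ℝ)..x, fu s * v s :=
    intervalIntegral.integral_sub hiufv hifuv
  have E2 : (∫ s in (0:ℝ)..x, ud s * ∫ t in (0:ℝ)..s, fv t)
      = ud 0 * (∫ s in (0:ℝ)..x, ∫ t in (0:ℝ)..s, fv t)
        + ∫ s in (0:ℝ)..x, (∫ t in (0:ℝ)..s, fu t) * ∫ t in (0:ℝ)..s, fv t := by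
    have h : EqOn (fun s => ud s * ∫ t in (0:ℝ)..s, fv t)
        (fun s => ud 0 * (∫ t in (0:ℝ)..s, fv t)
          + (∫ t in (0:ℝ)..s, fu t) * ∫ t in (0:ℝ)..s, fv t) (Set.uIcc 0 x) := by
      intro s hs; simp only; rw [hud s (hIccsub hs)]; ring
    rw [intervalIntegral.integral_congr h,
      intervalIntegral.integral_add (hiFv.const_mul _) hiFuFv,
      intervalIntegral.integral_const_mul]
  have E3 : (∫ s in (0:ℝ)..x, vd s * ∫ t in (0:ℝ)..s, fu t)
      = vd 0 * (∫ s in (0:ℝ)..x, ∫ t in (0:ℝ)..s, fu t)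
        + ∫ s in (0:ℝ)..x, (∫ t in (0:ℝ)..s, fv t) * ∫ t in (0:ℝ)..s, fu t := by
    have h : EqOn (fun s => vd s * ∫ t in (0:ℝ)..s, fu t)
        (fun s => vd 0 * (∫ t in (0:ℝ)..s, fu t)
          + (∫ t in (0:ℝ)..s, fv t) * ∫ t in (0:ℝ)..s, fu t) (Set.uIcc 0 x) := by
      intro s hs; simp only; rw [hvd s (hIccsub hs)]; ring
    rw [intervalIntegral.integral_congr h,
      intervalIntegral.integral_add (hiFu.const_mul _) hiFvFu,
      intervalIntegral.integral_const_mul]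
  have E4 : (∫ s in (0:ℝ)..x, ud s)
      = (x:ℂ) * ud 0 + ∫ s in (0:ℝ)..x, ∫ t in (0:ℝ)..s, fu t := by
    have h : EqOn ud
        (fun s => ud 0 + ∫ t in (0:ℝ)..s, fu t) (Set.uIcc 0 x) := by
      intro s hs; exact hud s (hIccsub hs)
    rw [intervalIntegral.integral_congr h,
      intervalIntegral.integral_add intervalIntegrable_const hiFu,
      intervalIntegral.integral_const]
    simp [Complex.real_smul, mul_comm]
  have E5 : (∫ s in (0:ℝ)..x, vd s)
      = (x:ℂ) * vd 0 + ∫ s in (0:ℝ)..x, ∫ t in (0:ℝ)..s, fv t := by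
    have h : EqOn vd
        (fun s => vd 0 + ∫ t in (0:ℝ)..s, fv t) (Set.uIcc 0 x) := by
      intro s hs; exact hvd s (hIccsub hs)
    rw [intervalIntegral.integral_congr h,
      intervalIntegral.integral_add intervalIntegrable_const hiFv,
      intervalIntegral.integral_const]
    simp [Complex.real_smul, mul_comm]
  have Hc : (∫ s in (0:ℝ)..x, (∫ t in (0:ℝ)..s, fu t) * ∫ t in (0:ℝ)..s, fv t)
      = ∫ s in (0:ℝ)..x, (∫ t in (0:ℝ)..s, fv t) * ∫ t in (0:ℝ)..s, fu t := by
    apply intervalIntegral.integral_congr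
    intro s _; exact mul_comm _ _
  rw [hu x hxI, hud x hxI, hv x hxI, hvd x hxI, E1, E1a, E1b]
  linear_combination P1 - P2 + E2 - E3 + vd 0 * E4 - ud 0 * E5 + Hc



/-- `y` (with first derivative `yd`) solves the Hill equation `-y'' + q y = λ y` on `[0,1]`
in the Carathéodory sense: `y` and `y'` are absolutely continuous and the equation holds
almost everywhere, expressed via the equivalent integral equations. -/
structure IsHillSolution (q : ℝ → ℂ) (lam : ℂ) (y yd : ℝ → ℂ) : Prop where
  int_yd : IntervalIntegrable yd volume 0 1
  int_rhs : IntervalIntegrable (fun s => q s * y s - lam * y s) volume 0 1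
  y_eq : ∀ x ∈ Icc (0:ℝ) 1, y x = y 0 + ∫ s in (0:ℝ)..x, yd s
  yd_eq : ∀ x ∈ Icc (0:ℝ) 1, yd x = yd 0 + ∫ s in (0:ℝ)..x, (q s * y s - lam * y s)

/-- The standard context for the Hill operator: a `1`-periodic integrable potential `q`
together with the fundamental solutions `θ`, `φ` (with `x`-derivatives `θd`, `φd`)
of `-y'' + q y = λ y` normalized at `x = 0`, jointly continuous in `(x, λ)`,
entire in `λ` for fixed `x`, and satisfying the Wronskian identity. -/
structure HillContext where
  q : ℝ → ℂ
  int_q : IntervalIntegrable q volume 0 1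
  periodic_q : ∀ x, q (x + 1) = q x
  θ : ℝ → ℂ → ℂ
  θd : ℝ → ℂ → ℂ
  φ : ℝ → ℂ → ℂ
  φd : ℝ → ℂ → ℂ
  sol_θ : ∀ lam, IsHillSolution q lam (fun x => θ x lam) (fun x => θd x lam)
  sol_φ : ∀ lam, IsHillSolution q lam (fun x => φ x lam) (fun x => φd x lam)
  θ_init : ∀ lam, θ 0 lam = 1
  θd_init : ∀ lam, θd 0 lam = 0
  φ_init : ∀ lam, φ 0 lam = 0
  φd_init : ∀ lam, φd 0 lam = 1
  θ_cont : Continuous fun p : ℝ × ℂ => θ p.1 p.2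
  θd_cont : Continuous fun p : ℝ × ℂ => θd p.1 p.2
  φ_cont : Continuous fun p : ℝ × ℂ => φ p.1 p.2
  φd_cont : Continuous fun p : ℝ × ℂ => φd p.1 p.2
  θ_entire : ∀ x, Differentiable ℂ (θ x)
  θd_entire : ∀ x, Differentiable ℂ (θd x)
  φ_entire : ∀ x, Differentiable ℂ (φ x)
  φd_entire : ∀ x, Differentiable ℂ (φd x)
  wronskian : ∀ x lam, θ x lam * φd x lam - θd x lam * φ x lam = 1

namespace HillContext

variable (H : HillContext)

/-- The Hill discriminant `F(λ) = θ(1,λ) + φ'(1,λ)`. -/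
def F (lam : ℂ) : ℂ := H.θ 1 lam + H.φd 1 lam

/-- `Φ_t(x,λ) = φ(1,λ)θ(x,λ) + (e^{it} - θ(1,λ))φ(x,λ)`. -/
def Phi (t : ℝ) (x : ℝ) (lam : ℂ) : ℂ :=
  H.φ 1 lam * H.θ x lam + (Complex.exp (Complex.I * t) - H.θ 1 lam) * H.φ x lam

/-- `G_t(x,λ) = θ'(1,λ)φ(x,λ) + (e^{it} - φ'(1,λ))θ(x,λ)`. -/
def G (t : ℝ) (x : ℝ) (lam : ℂ) : ℂ :=
  H.θd 1 lam * H.φ x lam + (Complex.exp (Complex.I * t) - H.φd 1 lam) * H.θ x lam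

end HillContext

/-- The `L²(0,1)` norm of a function. -/
def l2norm (f : ℝ → ℂ) : ℝ := Real.sqrt (∫ x in (0:ℝ)..1, ‖f x‖ ^ 2)

namespace HillContext

variable (H : HillContext)

/-- The normalized eigenfunction `Ψ_{n,t}` along the branch `lamn`. -/
def Psi (lamn : ℝ → ℂ) (t : ℝ) (x : ℝ) : ℂ :=
  if l2norm (fun s => H.Phi t s (lamn t)) ≠ 0 then
    H.Phi t x (lamn t) / (l2norm (fun s => H.Phi t s (lamn t)) : ℂ)
  else
    H.G t x (lamn t) / (l2norm (fun s => H.G t s (lamn t)) : ℂ)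

/-- The normalized adjoint eigenfunction `Ψ*_{n,t}` along the branch `lamn`. -/
def PsiStar (lamn : ℝ → ℂ) (t : ℝ) (x : ℝ) : ℂ :=
  if l2norm (fun s => H.Phi (-t) s (lamn t)) ≠ 0 then
    (starRingEnd ℂ) (H.Phi (-t) x (lamn t)) / (l2norm (fun s => H.Phi (-t) s (lamn t)) : ℂ)
  else
    (starRingEnd ℂ) (H.G (-t) x (lamn t)) / (l2norm (fun s => H.G (-t) s (lamn t)) : ℂ)

/-- `α_n(t) = ∫₀¹ Ψ_{n,t}(x) conj(Ψ*_{n,t}(x)) dx`. -/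
def alpha (lamn : ℝ → ℂ) (t : ℝ) : ℂ :=
  ∫ x in (0:ℝ)..1, H.Psi lamn t x * (starRingEnd ℂ) (H.PsiStar lamn t x)

end HillContext

/-- `g` (with first derivative `gd`) solves `-g'' + q g - λ g = ψ` on `[0,1]` in the
Carathéodory sense: `g` is an associated function for the eigenfunction `ψ`. -/
structure IsHillAssociated (q : ℝ → ℂ) (lam : ℂ) (ψ g gd : ℝ → ℂ) : Prop where
  int_gd : IntervalIntegrable gd volume 0 1
  int_rhs : IntervalIntegrable (fun s => q s * g s - lam * g s - ψ s) volume 0 1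
  g_eq : ∀ x ∈ Icc (0:ℝ) 1, g x = g 0 + ∫ s in (0:ℝ)..x, gd s
  gd_eq : ∀ x ∈ Icc (0:ℝ) 1,
    gd x = gd 0 + ∫ s in (0:ℝ)..x, (q s * g s - lam * g s - ψ s)



lemma slope_factor {h I : ℂ → ℂ} {z₀ : ℂ} (hd : DifferentiableAt ℂ h z₀)
    (hfac : ∀ z, h z = (z₀ - z) * I z) (hI : ContinuousAt I z₀) :
    deriv h z₀ = -I z₀ := by
  have hslope : Filter.Tendsto (slope h z₀) (nhdsWithin z₀ {z₀}ᶜ) (nhds (deriv h z₀)) := by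
    have := hd.hasDerivAt
    rwa [hasDerivAt_iff_tendsto_slope] at this
  have heq : slope h z₀ =ᶠ[nhdsWithin z₀ {z₀}ᶜ] fun z => -I z := by
    filter_upwards [self_mem_nhdsWithin] with z hz
    have hz' : z - z₀ ≠ 0 := sub_ne_zero.mpr hz
    rw [slope_def_field, hfac, hfac]
    field_simp
    ring
  have h2 : Filter.Tendsto (fun z => -I z) (nhdsWithin z₀ {z₀}ᶜ) (nhds (-I z₀)) :=
    (hI.tendsto.neg).mono_left nhdsWithin_le_nhds
  exact tendsto_nhds_unique (hslope.congr' heq) h2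

lemma cont_param (k : ℝ → ℂ → ℂ) (hk : Continuous fun p : ℝ × ℂ => k p.1 p.2) (z₀ : ℂ) :
    ContinuousAt (fun z => ∫ s in (0:ℝ)..1, k s z) z₀ := by
  obtain ⟨M, hM⟩ := (isCompact_Icc.prod (isCompact_closedBall z₀ 1)).exists_bound_of_continuousOn
    (hk.continuousOn (s := Icc (0:ℝ) 1 ×ˢ Metric.closedBall z₀ 1))
  apply intervalIntegral.continuousAt_of_dominated_interval (bound := fun _ => M)
  · filter_upwards with z
    exact (hk.comp (continuous_id.prodMk continuous_const)).aestronglyMeasurable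
  · filter_upwards [Metric.closedBall_mem_nhds z₀ zero_lt_one] with z hz
    filter_upwards with t ht
    have ht' : t ∈ Icc (0:ℝ) 1 := by
      rw [uIoc_of_le (by norm_num : (0:ℝ) ≤ 1)] at ht
      exact Ioc_subset_Icc_self ht
    exact hM (t, z) ⟨ht', hz⟩
  · exact intervalIntegrable_const
  · filter_upwards with t ht
    exact (hk.comp (continuous_const.prodMk continuous_id)).continuousAt

lemma entire_deriv {f : ℂ → ℂ} (hf : Differentiable ℂ f) : Differentiable ℂ (deriv f) := by
  have h1 : AnalyticOnNhd ℂ f univ :=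
    (hf.differentiableOn).analyticOnNhd isOpen_univ
  exact differentiableOn_univ.mp (h1.deriv.differentiableOn)

lemma entire_zero_of_mul {b e : ℂ → ℂ} (hb : Differentiable ℂ b) (he : Differentiable ℂ e)
    (hprod : ∀ z, b z * e z = 0) (hbne : ∃ z, b z ≠ 0) : ∀ z, e z = 0 := by
  by_contra hcon
  push_neg at hcon
  obtain ⟨z₁, hz₁⟩ := hcon
  have hnb : ∀ᶠ z in nhds z₁, e z ≠ 0 :=
    he.continuous.continuousAt.eventually_ne hz₁
  have hb0 : b =ᶠ[nhds z₁] 0 := by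
    filter_upwards [hnb] with z hz
    have := hprod z
    rcases mul_eq_zero.mp this with h | h
    · exact h
    · exact absurd h hz
  have := (hb.differentiableOn.analyticOnNhd isOpen_univ).eqOn_zero_of_preconnected_of_eventuallyEq_zero
    isPreconnected_univ (mem_univ z₁) hb0
  obtain ⟨z, hz⟩ := hbne
  exact hz (this (mem_univ z))


lemma HillContext.solRepr (H : HillContext) {lam : ℂ} {u ud fu : ℝ → ℂ} {x : ℝ}
    (h0 : (0:ℝ) ≤ x) (hx1 : x ≤ 1)
    (hiud : IntervalIntegrable ud volume 0 1) (hifu : IntervalIntegrable fu volume 0 1)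
    (hu : ∀ y ∈ Icc (0:ℝ) 1, u y = u 0 + ∫ s in (0:ℝ)..y, ud s)
    (hud : ∀ y ∈ Icc (0:ℝ) 1, ud y = ud 0 + ∫ s in (0:ℝ)..y, fu s)
    (hae : ∀ᵐ s ∂(volume : Measure ℝ), fu s = H.q s * u s - lam * u s) :
    u x = u 0 * H.θ x lam + ud 0 * H.φ x lam ∧
    ud x = u 0 * H.θd x lam + ud 0 * H.φd x lam := by
  have Sφ := H.sol_φ lam
  have Sθ := H.sol_θ lam
  have W1 := wron h0 hx1 hiud hifu Sφ.int_yd Sφ.int_rhs hu hud Sφ.y_eq Sφ.yd_eq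
  have W2 := wron h0 hx1 hiud hifu Sθ.int_yd Sθ.int_rhs hu hud Sθ.y_eq Sθ.yd_eq
  have hz1 : (∫ s in (0:ℝ)..x,
      (u s * (H.q s * H.φ s lam - lam * H.φ s lam) - fu s * H.φ s lam))
      = ∫ s in (0:ℝ)..x, (0:ℂ) := by
    apply intervalIntegral.integral_congr_ae
    filter_upwards [hae] with s hs _
    rw [hs]; ring
  have hz2 : (∫ s in (0:ℝ)..x,
      (u s * (H.q s * H.θ s lam - lam * H.θ s lam) - fu s * H.θ s lam))
      = ∫ s in (0:ℝ)..x, (0:ℂ) := by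
    apply intervalIntegral.integral_congr_ae
    filter_upwards [hae] with s hs _
    rw [hs]; ring
  rw [hz1, intervalIntegral.integral_zero, H.φ_init, H.φd_init] at W1
  rw [hz2, intervalIntegral.integral_zero, H.θ_init, H.θd_init] at W2
  have key := H.wronskian x lam
  constructor
  · linear_combination (H.θ x lam) * W1 - (H.φ x lam) * W2 - u x * key
  · linear_combination (H.θd x lam) * W1 - (H.φd x lam) * W2 - ud x * key

lemma HillContext.reflect (H : HillContext)
    (heven : ∀ᵐ x : ℝ ∂(volume : Measure ℝ), H.q (-x) = H.q x)
    (lam : ℂ) {w wd : ℝ → ℂ} (hw : IsHillSolution H.q lam w wd) :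
    w 0 = w 1 * H.θ 1 lam - wd 1 * H.φ 1 lam ∧
    wd 0 = wd 1 * H.φd 1 lam - w 1 * H.θd 1 lam := by
  have h10 : (1:ℝ) - 0 = 1 := by norm_num
  have h11 : (1:ℝ) - 1 = 0 := by norm_num
  have hmem : ∀ y ∈ Icc (0:ℝ) 1, (1 - y) ∈ Icc (0:ℝ) 1 :=
    fun y hy => ⟨by linarith [hy.2], by linarith [hy.1]⟩
  have hiud : IntervalIntegrable (fun s => -wd (1 - s)) volume 0 1 := by
    have h := ((hw.int_yd.comp_sub_left 1).neg).symm
    norm_num at h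
    exact h
  have hifu : IntervalIntegrable
      (fun s => H.q (1-s) * w (1-s) - lam * w (1-s)) volume 0 1 := by
    have h := (hw.int_rhs.comp_sub_left 1).symm
    norm_num at h
    exact h
  have hsubint : ∀ y ∈ Icc (0:ℝ) 1, Set.uIcc (0:ℝ) (1-y) ⊆ Set.uIcc (0:ℝ) 1 := by
    intro y hy
    rw [uIcc_of_le (by linarith [hy.2] : (0:ℝ) ≤ 1 - y), uIcc_of_le (by norm_num : (0:ℝ) ≤ 1)]
    exact Icc_subset_Icc le_rfl (by linarith [hy.1])
  have hu : ∀ y ∈ Icc (0:ℝ) 1, w (1 - y) = w (1 - 0) + ∫ s in (0:ℝ)..y, -wd (1 - s) := by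
    intro y hy
    have e1 := hw.y_eq (1 - y) (hmem y hy)
    have e2 := hw.y_eq 1 (by norm_num)
    have hsub := intervalIntegral.integral_interval_sub_left hw.int_yd
      (hw.int_yd.mono_set (hsubint y hy))
    have hci : (∫ s in (0:ℝ)..y, -wd (1 - s)) = -∫ t in (1-y)..(1:ℝ), wd t := by
      rw [intervalIntegral.integral_neg]
      congr 1
      simpa using intervalIntegral.integral_comp_sub_left (a := (0:ℝ)) (b := y) wd 1
    rw [h10, hci]
    linear_combination e1 - e2 - hsub
  have hud : ∀ y ∈ Icc (0:ℝ) 1, -wd (1 - y)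
      = -wd (1 - 0) + ∫ s in (0:ℝ)..y, (H.q (1-s) * w (1-s) - lam * w (1-s)) := by
    intro y hy
    have e1 := hw.yd_eq (1 - y) (hmem y hy)
    have e2 := hw.yd_eq 1 (by norm_num)
    have hsub := intervalIntegral.integral_interval_sub_left hw.int_rhs
      (hw.int_rhs.mono_set (hsubint y hy))
    have hci : (∫ s in (0:ℝ)..y, (H.q (1-s) * w (1-s) - lam * w (1-s)))
        = ∫ t in (1-y)..(1:ℝ), (H.q t * w t - lam * w t) := by
      simpa using intervalIntegral.integral_comp_sub_left (a := (0:ℝ)) (b := y)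
        (fun t => H.q t * w t - lam * w t) 1
    rw [h10, hci]
    linear_combination -e1 + e2 + hsub
  have hae : ∀ᵐ s ∂(volume : Measure ℝ),
      (H.q (1-s) * w (1-s) - lam * w (1-s)) = H.q s * w (1-s) - lam * w (1-s) := by
    filter_upwards [heven] with s hs
    have hq : H.q (1 - s) = H.q s := by
      rw [show (1:ℝ) - s = -s + 1 by ring, H.periodic_q, hs]
    rw [hq]
  have hrep := H.solRepr (u := fun s => w (1 - s)) (ud := fun s => -wd (1 - s))
      (fu := fun s => H.q (1-s) * w (1-s) - lam * w (1-s)) (x := 1)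
      zero_le_one le_rfl hiud hifu hu hud hae
  rw [h10, h11] at hrep
  exact ⟨by linear_combination hrep.1, by linear_combination -hrep.2⟩

lemma HillContext.mixedW (H : HillContext) {lam mu : ℂ} {u ud v vd : ℝ → ℂ}
    (hu : IsHillSolution H.q lam u ud) (hv : IsHillSolution H.q mu v vd) :
    u 1 * vd 1 - ud 1 * v 1
      = u 0 * vd 0 - ud 0 * v 0 + (lam - mu) * ∫ s in (0:ℝ)..1, u s * v s := by
  have W := wron zero_le_one le_rfl hu.int_yd hu.int_rhs hv.int_yd hv.int_rhs
    hu.y_eq hu.yd_eq hv.y_eq hv.yd_eq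
  rw [W]
  congr 1
  rw [← intervalIntegral.integral_const_mul]
  apply intervalIntegral.integral_congr
  intro s _
  simp only
  ring

lemma HillContext.assocW (H : HillContext) {lam : ℂ} {u ud ψ g gd : ℝ → ℂ}
    (hu : IsHillSolution H.q lam u ud) (hg : IsHillAssociated H.q lam ψ g gd) :
    u 1 * gd 1 - ud 1 * g 1
      = u 0 * gd 0 - ud 0 * g 0 - ∫ s in (0:ℝ)..1, u s * ψ s := by
  have W := wron zero_le_one le_rfl hu.int_yd hu.int_rhs hg.int_gd hg.int_rhs
    hu.y_eq hu.yd_eq hg.g_eq hg.gd_eq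
  rw [W]
  have hz : (∫ s in (0:ℝ)..1,
      (u s * (H.q s * g s - lam * g s - ψ s) - (H.q s * u s - lam * u s) * g s))
      = ∫ s in (0:ℝ)..1, -(u s * ψ s) := by
    apply intervalIntegral.integral_congr
    intro s _
    simp only
    ring
  rw [hz, intervalIntegral.integral_neg]
  ring


/-- (Corollary 1(a).)  Suppose `q` is even (`q(-x) = q(x)` a.e.).  Let `λ₀` be a double
eigenvalue of `L₀` (resp. `L_π`): `F(λ₀) = 2 cos t₀` with `t₀ ∈ {0,π}`, `F'(λ₀) = 0`,
`F''(λ₀) ≠ 0`; assume `φ(1,·)` and `θ'(1,·)` are not identically zero and have at most a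
simple zero at `λ₀`.  Then `φ(1,λ₀) = 0` and `θ'(1,λ₀) = 0`, hence
`θ(1,λ₀) = φ'(1,λ₀) = e^{it₀}` and every solution of `-y'' + q y = λ₀ y` on `[0,1]`
satisfies the (anti)periodic boundary conditions `y(1) = e^{it₀} y(0)`,
`y'(1) = e^{it₀} y'(0)`.  In particular the eigenvalue `λ₀` has geometric multiplicity
`2` and `L_{t₀}` has no associated function corresponding to `λ₀`. -/
theorem even_potential_double_eigenvalue_structure (H : HillContext)
    (heven : ∀ᵐ x : ℝ ∂volume, H.q (-x) = H.q x)
    (t₀ : ℝ) (ht₀ : t₀ = 0 ∨ t₀ = π) (lam₀ : ℂ)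
    (hF0 : H.F lam₀ = 2 * (Real.cos t₀ : ℂ))
    (hF1 : deriv H.F lam₀ = 0)
    (hF2 : iteratedDeriv 2 H.F lam₀ ≠ 0)
    (hφ_ne : ∃ mu : ℂ, H.φ 1 mu ≠ 0)
    (hθd_ne : ∃ mu : ℂ, H.θd 1 mu ≠ 0)
    (hφ_simple : H.φ 1 lam₀ = 0 → deriv (fun z => H.φ 1 z) lam₀ ≠ 0)
    (hθd_simple : H.θd 1 lam₀ = 0 → deriv (fun z => H.θd 1 z) lam₀ ≠ 0) :
    H.φ 1 lam₀ = 0 ∧ H.θd 1 lam₀ = 0 ∧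
    H.θ 1 lam₀ = Complex.exp (Complex.I * (t₀ : ℂ)) ∧
    H.φd 1 lam₀ = Complex.exp (Complex.I * (t₀ : ℂ)) ∧
    (∀ y yd : ℝ → ℂ, IsHillSolution H.q lam₀ y yd →
      y 1 = Complex.exp (Complex.I * (t₀ : ℂ)) * y 0 ∧
      yd 1 = Complex.exp (Complex.I * (t₀ : ℂ)) * yd 0) ∧
    (∀ ψ ψd g gd : ℝ → ℂ,
      IsHillSolution H.q lam₀ ψ ψd →
      (∃ x ∈ Icc (0:ℝ) 1, ψ x ≠ 0) →
      ψ 1 = Complex.exp (Complex.I * (t₀ : ℂ)) * ψ 0 →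
      ψd 1 = Complex.exp (Complex.I * (t₀ : ℂ)) * ψd 0 →
      IsHillAssociated H.q lam₀ ψ g gd →
      g 1 = Complex.exp (Complex.I * (t₀ : ℂ)) * g 0 →
      gd 1 = Complex.exp (Complex.I * (t₀ : ℂ)) * gd 0 →
      False) := by
  classical
  obtain ⟨ε, hε_def, hε2, hεcos⟩ :
      ∃ ε : ℂ, Complex.exp (Complex.I * (t₀:ℂ)) = ε ∧ ε * ε = 1 ∧
        ε = ((Real.cos t₀ : ℝ) : ℂ) := by
    rcases ht₀ with h | h <;> subst h
    · exact ⟨1, by simp, by norm_num, by norm_num⟩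
    · refine ⟨-1, ?_, by norm_num, by simp [Real.cos_pi]⟩
      rw [show Complex.I * ((π:ℝ):ℂ) = ((π:ℝ):ℂ) * Complex.I from mul_comm _ _,
        Complex.exp_pi_mul_I]
  rw [hε_def]
  have hεne : ε ≠ 0 := by
    intro h; rw [h, mul_zero] at hε2; exact one_ne_zero hε2.symm
  -- Step 1: even-potential symmetry identities, for every λ
  have hkeyc : ∀ lam : ℂ, H.θd 1 lam * (H.θ 1 lam - H.φd 1 lam) = 0 := by
    intro lam
    have r1 := H.reflect heven lam (H.sol_θ lam)
    rw [H.θ_init, H.θd_init] at r1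
    linear_combination r1.2
  have hkeyb : ∀ lam : ℂ, H.φ 1 lam * (H.θ 1 lam - H.φd 1 lam) = 0 := by
    intro lam
    have r2 := H.reflect heven lam (H.sol_φ lam)
    rw [H.φ_init, H.φd_init] at r2
    linear_combination -r2.1
  -- Step 2: θ(1,·) = φd(1,·) everywhere, by the identity theorem
  have had : ∀ z : ℂ, H.φd 1 z = H.θ 1 z := by
    have hz := entire_zero_of_mul (b := fun z => H.φ 1 z)
      (e := fun z => H.θ 1 z - H.φd 1 z)
      (H.φ_entire 1) ((H.θ_entire 1).sub (H.φd_entire 1)) hkeyb hφ_ne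
    intro z
    linear_combination -(hz z)
  -- Step 3: F = 2θ(1,·) and values at lam₀
  have hFa : ∀ z, H.F z = 2 * H.θ 1 z := by
    intro z; rw [HillContext.F, had z]; ring
  have haF : H.θ 1 lam₀ = ε := by
    have h := hF0
    rw [hFa lam₀] at h
    rw [hεcos]
    linear_combination h / 2
  -- Step 4: derivative facts for a = θ(1,·)
  have hda : deriv (fun z => H.θ 1 z) lam₀ = 0 := by
    have hFf : H.F = fun z => 2 * H.θ 1 z := funext hFa
    have h := hF1
    rw [hFf, deriv_const_mul _ ((H.θ_entire 1) lam₀)] at h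
    linear_combination h / 2
  have hdda : deriv (deriv (fun z => H.θ 1 z)) lam₀ ≠ 0 := by
    intro hcon
    apply hF2
    have h2 : iteratedDeriv 2 H.F lam₀ = deriv (deriv H.F) lam₀ := by
      rw [iteratedDeriv_succ, iteratedDeriv_one]
    rw [h2]
    have hFf : H.F = fun z => 2 * H.θ 1 z := funext hFa
    have hFder : deriv H.F = fun z => 2 * deriv (fun w => H.θ 1 w) z := by
      funext z
      rw [hFf, deriv_const_mul _ ((H.θ_entire 1) z)]
    rw [hFder, deriv_const_mul _ ((entire_deriv (H.θ_entire 1)) lam₀), hcon, mul_zero]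
  -- Step 5: b·c has a double zero at lam₀
  have hbc : ∀ z, H.φ 1 z * H.θd 1 z = H.θ 1 z ^ 2 - 1 := by
    intro z
    have hw := H.wronskian 1 z
    have h := had z
    linear_combination -hw + H.θ 1 z * h
  have hbc0 : H.φ 1 lam₀ * H.θd 1 lam₀ = 0 := by
    rw [hbc lam₀, haF]
    linear_combination hε2
  have hder_prod : deriv (fun z => H.φ 1 z * H.θd 1 z) lam₀
      = deriv (fun z => H.φ 1 z) lam₀ * H.θd 1 lam₀
        + H.φ 1 lam₀ * deriv (fun z => H.θd 1 z) lam₀ :=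
    deriv_mul ((H.φ_entire 1) lam₀) ((H.θd_entire 1) lam₀)
  have hder_sq : deriv (fun z => H.φ 1 z * H.θd 1 z) lam₀ = 0 := by
    have hfn : (fun z => H.φ 1 z * H.θd 1 z) = fun z => H.θ 1 z ^ 2 - 1 := funext hbc
    rw [hfn]
    have hθ : HasDerivAt (fun z => H.θ 1 z) (deriv (fun z => H.θ 1 z) lam₀) lam₀ :=
      ((H.θ_entire 1) lam₀).hasDerivAt
    have hh : HasDerivAt (fun z => H.θ 1 z ^ 2 - 1)
        (2 * H.θ 1 lam₀ * deriv (fun z => H.θ 1 z) lam₀) lam₀ := by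
      have := (hθ.pow 2).sub_const 1
      simpa using this
    rw [hh.deriv, hda, mul_zero]
  -- Step 6: both φ(1,lam₀) and θd(1,lam₀) vanish
  have hb0 : H.φ 1 lam₀ = 0 := by
    by_contra hbne'
    have hc0 : H.θd 1 lam₀ = 0 := (mul_eq_zero.mp hbc0).resolve_left hbne'
    have h := hder_prod.symm.trans hder_sq
    rw [hc0, mul_zero, zero_add] at h
    exact hθd_simple hc0 ((mul_eq_zero.mp h).resolve_left hbne')
  have hc0 : H.θd 1 lam₀ = 0 := by
    by_contra hcne'
    have h := hder_prod.symm.trans hder_sq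
    rw [hb0, zero_mul, add_zero] at h
    exact hφ_simple hb0 ((mul_eq_zero.mp h).resolve_right hcne')
  have hd0 : H.φd 1 lam₀ = ε := by rw [had lam₀, haF]
  -- Step 7: second derivative of b·c at lam₀
  have hsecond : deriv (deriv (fun z => H.φ 1 z * H.θd 1 z)) lam₀
      = 2 * (deriv (fun z => H.φ 1 z) lam₀ * deriv (fun z => H.θd 1 z) lam₀) := by
    have hfn : deriv (fun z => H.φ 1 z * H.θd 1 z)
        = fun z => deriv (fun w => H.φ 1 w) z * H.θd 1 z
            + H.φ 1 z * deriv (fun w => H.θd 1 w) z := by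
      funext z
      exact deriv_mul ((H.φ_entire 1) z) ((H.θd_entire 1) z)
    rw [hfn]
    have h1 : HasDerivAt (fun z => deriv (fun w => H.φ 1 w) z * H.θd 1 z
        + H.φ 1 z * deriv (fun w => H.θd 1 w) z)
        ((deriv (deriv (fun w => H.φ 1 w)) lam₀ * H.θd 1 lam₀
          + deriv (fun w => H.φ 1 w) lam₀ * deriv (fun w => H.θd 1 w) lam₀)
         + (deriv (fun w => H.φ 1 w) lam₀ * deriv (fun w => H.θd 1 w) lam₀
          + H.φ 1 lam₀ * deriv (deriv (fun w => H.θd 1 w)) lam₀)) lam₀ := by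
      exact ((((entire_deriv (H.φ_entire 1)) lam₀).hasDerivAt.mul
        ((H.θd_entire 1) lam₀).hasDerivAt)).add
        (((H.φ_entire 1) lam₀).hasDerivAt.mul
          ((entire_deriv (H.θd_entire 1)) lam₀).hasDerivAt)
    rw [h1.deriv, hb0, hc0]
    ring
  have hsecond2 : deriv (deriv (fun z => H.φ 1 z * H.θd 1 z)) lam₀
      = 2 * ε * deriv (deriv (fun z => H.θ 1 z)) lam₀ := by
    have hfn2 : (fun z => H.φ 1 z * H.θd 1 z) = fun z => H.θ 1 z ^ 2 - 1 := funext hbc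
    rw [hfn2]
    have hfn3 : deriv (fun z => H.θ 1 z ^ 2 - 1)
        = fun z => 2 * H.θ 1 z * deriv (fun w => H.θ 1 w) z := by
      funext z
      have hθ : HasDerivAt (fun w => H.θ 1 w) (deriv (fun w => H.θ 1 w) z) z :=
        ((H.θ_entire 1) z).hasDerivAt
      have := (hθ.pow 2).sub_const 1
      simp only [Nat.cast_ofNat, pow_one] at this
      have h5 := this.deriv
      rw [show (fun z => H.θ 1 z ^ 2 - 1) = (fun x => ((fun w => H.θ 1 w) ^ 2) x - 1) from rfl, h5]
      norm_num
    rw [hfn3]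
    have h4 : HasDerivAt (fun z => 2 * H.θ 1 z * deriv (fun w => H.θ 1 w) z)
        ((2 * deriv (fun w => H.θ 1 w) lam₀) * deriv (fun w => H.θ 1 w) lam₀
          + (2 * H.θ 1 lam₀) * deriv (deriv (fun w => H.θ 1 w)) lam₀) lam₀ :=
      (((H.θ_entire 1) lam₀).hasDerivAt.const_mul 2).mul
        ((entire_deriv (H.θ_entire 1)) lam₀).hasDerivAt
    rw [h4.deriv, hda, haF]
    ring
  have hprod_ne : deriv (fun z => H.φ 1 z) lam₀ * deriv (fun z => H.θd 1 z) lam₀ ≠ 0 := by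
    intro hzero
    have h := hsecond.symm.trans hsecond2
    rw [hzero, mul_zero] at h
    have h6 : ε * deriv (deriv (fun z => H.θ 1 z)) lam₀ = 0 := by linear_combination -h / 2
    exact hdda ((mul_eq_zero.mp h6).resolve_left hεne)
  have hbdne : deriv (fun z => H.φ 1 z) lam₀ ≠ 0 := fun h => hprod_ne (by rw [h, zero_mul])
  have hcdne : deriv (fun z => H.θd 1 z) lam₀ ≠ 0 := fun h => hprod_ne (by rw [h, mul_zero])
  -- Step 8: derivative-integral identities
  have hIθθ : (∫ s in (0:ℝ)..1, H.θ s lam₀ * H.θ s lam₀)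
      = -(ε * deriv (fun z => H.θd 1 z) lam₀) := by
    have hfac : ∀ mu : ℂ, ε * H.θd 1 mu
        = (lam₀ - mu) * ∫ s in (0:ℝ)..1, H.θ s lam₀ * H.θ s mu := by
      intro mu
      have W := H.mixedW (H.sol_θ lam₀) (H.sol_θ mu)
      simp only [H.θ_init, H.θd_init] at W
      linear_combination W - H.θd 1 mu * haF + H.θ 1 mu * hc0
    have hcont : ContinuousAt (fun mu : ℂ => ∫ s in (0:ℝ)..1, H.θ s lam₀ * H.θ s mu) lam₀ :=
      cont_param _ ((H.θ_cont.comp (continuous_fst.prodMk continuous_const)).mul H.θ_cont) lam₀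
    have hd : DifferentiableAt ℂ (fun mu => ε * H.θd 1 mu) lam₀ :=
      ((H.θd_entire 1) lam₀).const_mul ε
    have hres := slope_factor hd hfac hcont
    rw [deriv_const_mul _ ((H.θd_entire 1) lam₀),
      show deriv (H.θd 1) = deriv (fun z => H.θd 1 z) from rfl] at hres
    linear_combination hres
  have hIφφ : (∫ s in (0:ℝ)..1, H.φ s lam₀ * H.φ s lam₀)
      = ε * deriv (fun z => H.φ 1 z) lam₀ := by
    have hfac : ∀ mu : ℂ, (-ε) * H.φ 1 mu
        = (lam₀ - mu) * ∫ s in (0:ℝ)..1, H.φ s lam₀ * H.φ s mu := by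
      intro mu
      have W := H.mixedW (H.sol_φ lam₀) (H.sol_φ mu)
      simp only [H.φ_init, H.φd_init] at W
      linear_combination W - H.φd 1 mu * hb0 + H.φ 1 mu * hd0
    have hcont : ContinuousAt (fun mu : ℂ => ∫ s in (0:ℝ)..1, H.φ s lam₀ * H.φ s mu) lam₀ :=
      cont_param _ ((H.φ_cont.comp (continuous_fst.prodMk continuous_const)).mul H.φ_cont) lam₀
    have hd : DifferentiableAt ℂ (fun mu => (-ε) * H.φ 1 mu) lam₀ :=
      ((H.φ_entire 1) lam₀).const_mul (-ε)
    have hres := slope_factor hd hfac hcont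
    rw [deriv_const_mul _ ((H.φ_entire 1) lam₀),
      show deriv (H.φ 1) = deriv (fun z => H.φ 1 z) from rfl] at hres
    linear_combination hres
  have hIθφ : (∫ s in (0:ℝ)..1, H.θ s lam₀ * H.φ s lam₀) = 0 := by
    have hfac : ∀ mu : ℂ, ε * H.φd 1 mu - 1
        = (lam₀ - mu) * ∫ s in (0:ℝ)..1, H.θ s lam₀ * H.φ s mu := by
      intro mu
      have W := H.mixedW (H.sol_θ lam₀) (H.sol_φ mu)
      simp only [H.θ_init, H.θd_init, H.φ_init, H.φd_init] at W
      linear_combination W - H.φd 1 mu * haF + H.φ 1 mu * hc0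
    have hcont : ContinuousAt (fun mu : ℂ => ∫ s in (0:ℝ)..1, H.θ s lam₀ * H.φ s mu) lam₀ :=
      cont_param _ ((H.θ_cont.comp (continuous_fst.prodMk continuous_const)).mul H.φ_cont) lam₀
    have hd : DifferentiableAt ℂ (fun mu => ε * H.φd 1 mu - 1) lam₀ :=
      (((H.φd_entire 1) lam₀).const_mul ε).sub_const 1
    have hres := slope_factor hd hfac hcont
    have hφdθ : (fun z => H.φd 1 z) = fun z => H.θ 1 z := funext had
    have hder1 : deriv (fun mu => ε * H.φd 1 mu - 1) lam₀ = 0 := by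
      have h7 : HasDerivAt (fun mu => ε * H.φd 1 mu - 1)
          (ε * deriv (fun z => H.φd 1 z) lam₀) lam₀ :=
        (((H.φd_entire 1) lam₀).hasDerivAt.const_mul ε).sub_const 1
      rw [h7.deriv, hφdθ, hda, mul_zero]
    rw [hder1] at hres
    linear_combination hres
  have hIθθ_ne : (∫ s in (0:ℝ)..1, H.θ s lam₀ * H.θ s lam₀) ≠ 0 := by
    rw [hIθθ]
    exact neg_ne_zero.mpr (mul_ne_zero hεne hcdne)
  have hIφφ_ne : (∫ s in (0:ℝ)..1, H.φ s lam₀ * H.φ s lam₀) ≠ 0 := by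
    rw [hIφφ]
    exact mul_ne_zero hεne hbdne
  -- continuity of fundamental solutions in x
  have hcθ : Continuous fun s => H.θ s lam₀ :=
    H.θ_cont.comp (continuous_id.prodMk continuous_const)
  have hcφ : Continuous fun s => H.φ s lam₀ :=
    H.φ_cont.comp (continuous_id.prodMk continuous_const)
  refine ⟨hb0, hc0, haF, hd0, ?_, ?_⟩
  · -- every solution satisfies the boundary conditions
    intro y yd hsol
    have hrep := H.solRepr zero_le_one le_rfl hsol.int_yd hsol.int_rhs hsol.y_eq hsol.yd_eq
      (Filter.Eventually.of_forall (fun s => rfl))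
    constructor
    · rw [hrep.1, haF, hb0]; ring
    · rw [hrep.2, hc0, hd0]; ring
  · -- no associated function
    intro ψ ψd g gd hψsol hψne hψbc hψdbc hassoc hgbc hgdbc
    obtain ⟨x₀, hx₀, hψx₀⟩ := hψne
    have W1 := H.assocW (H.sol_θ lam₀) hassoc
    simp only [H.θ_init, H.θd_init] at W1
    rw [haF, hc0, hgbc, hgdbc] at W1
    have hint1 : (∫ s in (0:ℝ)..1, H.θ s lam₀ * ψ s) = 0 := by
      linear_combination W1 - gd 0 * hε2
    have W2 := H.assocW (H.sol_φ lam₀) hassoc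
    simp only [H.φ_init, H.φd_init] at W2
    rw [hb0, hd0, hgbc, hgdbc] at W2
    have hint2 : (∫ s in (0:ℝ)..1, H.φ s lam₀ * ψ s) = 0 := by
      linear_combination W2 + g 0 * hε2
    have hψrep : ∀ x ∈ Icc (0:ℝ) 1, ψ x = ψ 0 * H.θ x lam₀ + ψd 0 * H.φ x lam₀ :=
      fun x hx => (H.solRepr hx.1 hx.2 hψsol.int_yd hψsol.int_rhs hψsol.y_eq hψsol.yd_eq
        (Filter.Eventually.of_forall (fun s => rfl))).1
    have hdec1 : (∫ s in (0:ℝ)..1, H.θ s lam₀ * ψ s)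
        = ψ 0 * (∫ s in (0:ℝ)..1, H.θ s lam₀ * H.θ s lam₀)
          + ψd 0 * ∫ s in (0:ℝ)..1, H.θ s lam₀ * H.φ s lam₀ := by
      rw [← intervalIntegral.integral_const_mul, ← intervalIntegral.integral_const_mul,
        ← intervalIntegral.integral_add
          ((Continuous.intervalIntegrable (u := fun s => H.θ s lam₀ * H.θ s lam₀) (hcθ.mul hcθ) 0 1).const_mul (ψ 0))
          ((Continuous.intervalIntegrable (u := fun s => H.θ s lam₀ * H.φ s lam₀) (hcθ.mul hcφ) 0 1).const_mul (ψd 0))]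
      apply intervalIntegral.integral_congr
      intro s hs
      have hs' : s ∈ Icc (0:ℝ) 1 := by
        rwa [uIcc_of_le (by norm_num : (0:ℝ) ≤ 1)] at hs
      simp only
      rw [hψrep s hs']
      ring
    have hdec2 : (∫ s in (0:ℝ)..1, H.φ s lam₀ * ψ s)
        = ψ 0 * (∫ s in (0:ℝ)..1, H.θ s lam₀ * H.φ s lam₀)
          + ψd 0 * ∫ s in (0:ℝ)..1, H.φ s lam₀ * H.φ s lam₀ := by
      rw [← intervalIntegral.integral_const_mul, ← intervalIntegral.integral_const_mul,
        ← intervalIntegral.integral_add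
          ((Continuous.intervalIntegrable (u := fun s => H.θ s lam₀ * H.φ s lam₀) (hcθ.mul hcφ) 0 1).const_mul (ψ 0))
          ((Continuous.intervalIntegrable (u := fun s => H.φ s lam₀ * H.φ s lam₀) (hcφ.mul hcφ) 0 1).const_mul (ψd 0))]
      apply intervalIntegral.integral_congr
      intro s hs
      have hs' : s ∈ Icc (0:ℝ) 1 := by
        rwa [uIcc_of_le (by norm_num : (0:ℝ) ≤ 1)] at hs
      simp only
      rw [hψrep s hs']
      ring
    have hψ00 : ψ 0 = 0 := by
      have h := hint1
      rw [hdec1, hIθφ, mul_zero, add_zero] at h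
      exact (mul_eq_zero.mp h).resolve_right hIθθ_ne
    have hψd00 : ψd 0 = 0 := by
      have h := hint2
      rw [hdec2, hIθφ, mul_zero, zero_add] at h
      exact (mul_eq_zero.mp h).resolve_right hIφφ_ne
    apply hψx₀
    rw [hψrep x₀ hx₀, hψ00, hψd00]
    ring


end
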